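/- Let G be a finite simple graph with n vertices and maximum degree D ≥ 1, and let B ≥ 1 be a natural number. Then the number of subgraphs of G that are trees with exactly B vertices is at most n · D^(2B-2). -/

import Mathlib

open SimpleGraph

/-- The edges of a walk are obtained by zipping the support with its tail. -/
lemma walk_edges_eq_zipWith {V : Type*} {G : SimpleGraph V} {u v : V} (p : G.Walk u v) :
    p.edges = List.zipWith (fun a b => s(a, b)) p.support p.support.tail := by
  induction p with
  | nil => simp
  | cons h q ih =>
    rw [Walk.edges_cons, Walk.support_cons, ih]
    rw [q.support_eq_cons]
    rfl

/-- Finset of lists `l` of length `k` with `List.Chain G.Adj r l`. -/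
def chainFinset {V : Type*} [Fintype V] [DecidableEq V] (G : SimpleGraph V)
    [DecidableRel G.Adj] : ℕ → V → Finset (List V)
  | 0, _ => {[]}
  | (k+1), r => (G.neighborFinset r).biUnion (fun a => (chainFinset G k a).image (a :: ·))

lemma mem_chainFinset {V : Type*} [Fintype V] [DecidableEq V] {G : SimpleGraph V}
    [DecidableRel G.Adj] {k : ℕ} {r : V} {l : List V} :
    l ∈ chainFinset G k r ↔ List.Chain G.Adj r l ∧ l.length = k := by
  induction k generalizing r l with
  | zero =>
    simp only [chainFinset, Finset.mem_singleton, List.length_eq_zero_iff]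
    constructor
    · rintro rfl; exact ⟨List.Chain.nil, rfl⟩
    · rintro ⟨-, rfl⟩; rfl
  | succ k ih =>
    simp only [chainFinset, Finset.mem_biUnion, Finset.mem_image, mem_neighborFinset]
    constructor
    · rintro ⟨a, ha, t, ht, rfl⟩
      obtain ⟨hc, hl⟩ := ih.mp ht
      exact ⟨List.Chain.cons ha hc, by simp [hl]⟩
    · rintro ⟨hc, hl⟩
      cases l with
      | nil => simp at hl
      | cons a t =>
        rw [List.Chain, List.isChain_cons_cons] at hc
        exact ⟨a, hc.1, t, ih.mpr ⟨hc.2, by simpa using hl⟩, rfl⟩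

lemma card_chainFinset_le {V : Type*} [Fintype V] [DecidableEq V] {G : SimpleGraph V}
    [DecidableRel G.Adj] {D : ℕ} (hdeg : ∀ v : V, G.degree v ≤ D) (k : ℕ) (r : V) :
    (chainFinset G k r).card ≤ D ^ k := by
  induction k generalizing r with
  | zero => simp [chainFinset]
  | succ k ih =>
    calc (chainFinset G (k+1) r).card
        ≤ ∑ a ∈ G.neighborFinset r, ((chainFinset G k a).image (a :: ·)).card :=
          Finset.card_biUnion_le
      _ ≤ ∑ a ∈ G.neighborFinset r, D ^ k := by
          refine Finset.sum_le_sum fun a _ => ?_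
          exact le_trans (Finset.card_image_le) (ih a)
      _ = G.degree r * D ^ k := by rw [Finset.sum_const, smul_eq_mul, degree]
      _ ≤ D * D ^ k := Nat.mul_le_mul_right _ (hdeg r)
      _ = D ^ (k+1) := (pow_succ' D k).symm

/-- Reachability transfers to induced subgraphs when a walk stays inside the set. -/
lemma reachable_induce_of_walk {V : Type*} {G : SimpleGraph V} {s : Set V} :
    ∀ {u v : V} (p : G.Walk u v), (∀ z ∈ p.support, z ∈ s) → ∀ (hu : u ∈ s) (hv : v ∈ s),
      (G.induce s).Reachable ⟨u, hu⟩ ⟨v, hv⟩ := by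
  intro u v p
  induction p with
  | nil => intro _ hu hv; rfl
  | @cons u w v h q ih =>
    intro hs hu hv
    have hw : w ∈ s := hs w (by simp)
    have h1 : (G.induce s).Adj ⟨u, hu⟩ ⟨w, hw⟩ := h
    exact h1.reachable.trans (ih (fun z hz => hs z (by simp [hz])) hw hv)

/-- Every tree on a fintype with `n` vertices has a closed walk of length `2*(n-1)`
visiting every vertex and every edge. -/
lemma tree_closed_walk : ∀ (n : ℕ) {W : Type*} [Fintype W] [DecidableEq W]
    (G : SimpleGraph W), Fintype.card W = n → G.IsTree →
    ∃ (r : W) (w : G.Walk r r), w.length = 2 * (n - 1) ∧ (∀ v : W, v ∈ w.support) ∧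
      (∀ e ∈ G.edgeSet, e ∈ w.edges) := by
  intro n
  induction n using Nat.strong_induction_on with
  | _ n ih =>
  intro W _ _ G hn hT
  classical
  have hne : Nonempty W := ((connected_iff G).mp hT.1).2
  obtain ⟨r0⟩ := hne
  have hn1 : 1 ≤ n := by rw [← hn]; exact Fintype.card_pos_iff.mpr ⟨r0⟩
  by_cases h1 : n = 1
  · subst h1
    refine ⟨r0, Walk.nil, by simp, ?_, ?_⟩
    · intro v
      have hone := Fintype.card_le_one_iff.mp (le_of_eq hn)
      simp [hone v r0]
    · intro e he
      induction e with
      | _ a b =>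
      have hab : G.Adj a b := (SimpleGraph.mem_edgeSet G).mp he
      exact absurd (Fintype.card_le_one_iff.mp (le_of_eq hn) a b) hab.ne
  · have hn2 : 2 ≤ n := by omega
    -- every vertex has positive degree
    have hpos : ∀ v : W, 0 < G.degree v := by
      intro v
      obtain ⟨u, hu⟩ := Fintype.exists_ne_of_one_lt_card (by omega) v
      obtain ⟨p⟩ := hT.1.preconnected v u
      have hnil : ¬ p.Nil := Walk.not_nil_of_ne (Ne.symm hu)
      exact (G.degree_pos_iff_exists_adj v).mpr ⟨_, Walk.adj_snd hnil⟩
    have hsum : ∑ v, G.degree v = 2 * (n - 1) := by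
      rw [G.sum_degrees_eq_twice_card_edges]
      have hce := hT.card_edgeFinset
      omega
    -- there is a leaf
    have hleaf : ∃ x : W, G.degree x = 1 := by
      by_contra hc
      push_neg at hc
      have h2 : ∀ v : W, 2 ≤ G.degree v := fun v => by
        have := hpos v; have := hc v; omega
      have hge : 2 * n ≤ ∑ v, G.degree v := by
        calc 2 * n = ∑ _v : W, 2 := by
              rw [Finset.sum_const, Finset.card_univ, hn, smul_eq_mul, mul_comm]
          _ ≤ ∑ v, G.degree v := Finset.sum_le_sum fun v _ => h2 v
      omega
    obtain ⟨x, hx⟩ := hleaf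
    have hx' : (G.neighborFinset x).card = 1 := hx
    obtain ⟨y, hy⟩ := Finset.card_eq_one.mp hx'
    have hxy : G.Adj x y := by
      rw [← mem_neighborFinset, hy]; exact Finset.mem_singleton_self y
    have huniq : ∀ z, G.Adj x z → z = y := fun z hz => by
      have hz' : z ∈ G.neighborFinset x := by rw [mem_neighborFinset]; exact hz
      rw [hy] at hz'; exact Finset.mem_singleton.mp hz'
    set s : Set W := {v | v ≠ x} with hs
    have hys : y ∈ s := (G.ne_of_adj hxy).symm
    have hcards : Fintype.card ↥s = n - 1 := by
      have heq : Fintype.card ↥s = Fintype.card {z : W // ¬ z = x} :=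
        Fintype.card_congr (Equiv.subtypeEquivRight (fun z => by simp [hs]))
      rw [heq, Fintype.card_subtype_compl, Fintype.card_subtype_eq, hn]
    -- the induced graph on s is a tree
    have hG' : (G.induce s).IsTree := by
      constructor
      · rw [connected_iff]
        refine ⟨?_, ⟨⟨y, hys⟩⟩⟩
        rintro ⟨u, hu⟩ ⟨v, hv⟩
        obtain ⟨q⟩ := hT.1.preconnected u v
        obtain ⟨p, hp⟩ := q.toPath
        have hux : u ≠ x := hu
        have hvx : v ≠ x := hv
        have hxp : x ∉ p.support := by
          intro hxs
          have hqnil : ¬ (p.takeUntil x hxs).Nil := Walk.not_nil_of_ne hux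
          have hdnil : ¬ (p.dropUntil x hxs).Nil := Walk.not_nil_of_ne (Ne.symm hvx)
          have hqrnil : ¬ (p.takeUntil x hxs).reverse.Nil := by
            rw [Walk.not_nil_iff_lt_length, Walk.length_reverse]
            rw [Walk.not_nil_iff_lt_length] at hqnil
            exact hqnil
          have ha : G.Adj x ((p.takeUntil x hxs).reverse.getVert 1) :=
            Walk.adj_snd hqrnil
          have hb : G.Adj x ((p.dropUntil x hxs).getVert 1) :=
            Walk.adj_snd hdnil
          have hay := huniq _ ha
          have hby := huniq _ hb
          have hyq : y ∈ (p.takeUntil x hxs).support := by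
            rw [← hay]
            have hmem : (p.takeUntil x hxs).reverse.getVert 1 ∈
                (p.takeUntil x hxs).reverse.support := by
              rw [Walk.mem_support_iff_exists_getVert]
              refine ⟨1, rfl, ?_⟩
              rw [Walk.length_reverse]
              rw [Walk.not_nil_iff_lt_length] at hqnil
              omega
            rwa [Walk.support_reverse, List.mem_reverse] at hmem
          have hyd : y ∈ (p.dropUntil x hxs).support.tail := by
            have h1 : (p.dropUntil x hxs).getVert 1 ∈ (p.dropUntil x hxs).support := by
              rw [Walk.mem_support_iff_exists_getVert]
              refine ⟨1, rfl, ?_⟩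
              rw [Walk.not_nil_iff_lt_length] at hdnil
              omega
            rw [(p.dropUntil x hxs).support_eq_cons] at h1
            rcases List.mem_cons.mp h1 with h2 | h2
            · exact ((G.ne_of_adj hxy) ((hby.symm.trans h2).symm)).elim
            · rwa [hby] at h2
          have hnd := hp.support_nodup
          rw [← p.take_spec hxs, Walk.support_append, List.nodup_append] at hnd
          exact hnd.2.2 _ hyq _ hyd rfl
        exact reachable_induce_of_walk p
          (fun z hz => (show z ≠ x from fun hzx => hxp (hzx ▸ hz))) hu hv
      · intro v c hc
        exact hT.2 (c.map (SimpleGraph.Embedding.induce (G := G) s).toHom)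
          ((Walk.map_isCycle_iff_of_injective Subtype.val_injective).mpr hc)
    obtain ⟨r', w', hlen', hsupp', hedges'⟩ :=
      ih (n - 1) (by omega) (G.induce s) hcards hG'
    set f : G.induce s →g G := (SimpleGraph.Embedding.induce (G := G) s).toHom with hf
    set w'' : G.Walk ↑r' ↑r' := w'.map f with hw''
    have hyw : y ∈ w''.support := by
      rw [hw'']; show y ∈ (w'.map f).support; rw [Walk.support_map]
      exact List.mem_map.mpr ⟨⟨y, hys⟩, hsupp' _, rfl⟩
    have hyx : G.Adj y x := hxy.symm
    refine ⟨↑r', (w''.takeUntil y hyw).append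
      ((Walk.cons hyx (Walk.cons hxy Walk.nil)).append (w''.dropUntil y hyw)), ?_, ?_, ?_⟩
    · have hts : (w''.takeUntil y hyw).length + (w''.dropUntil y hyw).length = w''.length := by
        have hcg := congrArg Walk.length (w''.take_spec hyw)
        rwa [Walk.length_append] at hcg
      have hwlen : w''.length = 2 * (n - 1 - 1) := by
        rw [hw'']; show (w'.map f).length = _; rw [Walk.length_map, hlen']
      rw [Walk.length_append, Walk.length_append]
      simp only [Walk.length_cons, Walk.length_nil]
      omega
    · intro v
      by_cases hvx : v = x
      · subst hvx
        rw [Walk.mem_support_append_iff, Walk.mem_support_append_iff]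
        right; left; simp
      · have hv : v ∈ w''.support := by
          rw [hw'']; show v ∈ (w'.map f).support; rw [Walk.support_map]
          exact List.mem_map.mpr ⟨⟨v, hvx⟩, hsupp' _, rfl⟩
        rw [← w''.take_spec hyw, Walk.mem_support_append_iff] at hv
        rw [Walk.mem_support_append_iff, Walk.mem_support_append_iff]
        rcases hv with hv | hv
        · left; exact hv
        · right; right; exact hv
    · intro e he
      induction e with
      | _ a b =>
      have hab : G.Adj a b := (SimpleGraph.mem_edgeSet G).mp he
      rw [Walk.edges_append, Walk.edges_append]
      by_cases hax : a = x
      · have hby : b = y := huniq b (hax ▸ hab)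
        subst hax; subst hby
        rw [List.mem_append, List.mem_append]
        right; left
        simp [Sym2.eq_swap]
      · by_cases hbx : b = x
        · have hay : a = y := huniq a (hbx ▸ hab.symm)
          subst hbx; subst hay
          rw [List.mem_append, List.mem_append]
          right; left
          simp
        · have hadj' : (G.induce s).Adj ⟨a, hax⟩ ⟨b, hbx⟩ := hab
          have he' : s((⟨a, hax⟩ : ↥s), ⟨b, hbx⟩) ∈ w'.edges :=
            hedges' _ ((SimpleGraph.mem_edgeSet _).mpr hadj')
          have hmem : s(a, b) ∈ w''.edges := by
            rw [hw'']; show s(a, b) ∈ (w'.map f).edges; rw [Walk.edges_map]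
            exact List.mem_map.mpr ⟨_, he', by rw [Sym2.map_pair_eq]; rfl⟩
          rw [← w''.take_spec hyw, Walk.edges_append] at hmem
          rw [List.mem_append, List.mem_append]
          rcases List.mem_append.mp hmem with hm | hm
          · left; exact hm
          · right; right; exact hm

theorem stmt_6 {V : Type*} [Fintype V] [DecidableEq V] (G : SimpleGraph V)
    [DecidableRel G.Adj] (D B : ℕ) (hD : 1 ≤ D) (hB : 1 ≤ B)
    (hdeg : ∀ v : V, G.degree v ≤ D) :
    Nat.card {H : G.Subgraph // H.coe.IsTree ∧ H.verts.ncard = B} ≤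
      Fintype.card V * D ^ (2 * B - 2) := by
  classical
  set k := 2 * B - 2 with hk
  set T : Finset (Σ _ : V, List V) := Finset.univ.sigma (fun r => chainFinset G k r) with hT
  have key : ∀ H : {H : G.Subgraph // H.coe.IsTree ∧ H.verts.ncard = B},
      ∃ p : (Σ _ : V, List V), p ∈ T ∧ H.1.verts = {v | v ∈ p.1 :: p.2} ∧
        H.1.edgeSet = {e | e ∈ List.zipWith (fun a b => s(a, b)) (p.1 :: p.2) p.2} := by
    rintro ⟨H, hTree, hcard⟩
    haveI : Fintype ↥H.verts := H.verts.toFinite.fintype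
    have hcardW : Fintype.card ↥H.verts = B := by
      rw [← Nat.card_eq_fintype_card, Nat.card_coe_set_eq, hcard]
    obtain ⟨r, w, hlen, hsupp, hedges⟩ := tree_closed_walk B H.coe hcardW hTree
    set w' : G.Walk ↑r ↑r := w.map H.hom with hw'
    refine ⟨⟨↑r, w'.support.tail⟩, ?_, ?_, ?_⟩
    · -- membership in T
      simp only [hT, Finset.mem_sigma, Finset.mem_univ, true_and]
      rw [mem_chainFinset]
      constructor
      · have hch := w'.isChain_adj_support
        rw [w'.support_eq_cons] at hch
        exact hch
      · have h1 : w'.support.length = w'.length + 1 := w'.length_support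
        have h2 : w'.length = w.length := Walk.length_map _ _
        have h3 : w'.support.tail.length = w'.support.length - 1 := List.length_tail
        omega
    · ext v
      simp only [Set.mem_setOf_eq]
      rw [show ((↑r : V) :: w'.support.tail) = w'.support from (w'.support_eq_cons).symm]
      rw [hw']; show _ ↔ v ∈ (w.map H.hom).support; rw [Walk.support_map]
      constructor
      · intro hv
        exact List.mem_map.mpr ⟨⟨v, hv⟩, hsupp _, rfl⟩
      · intro hv
        obtain ⟨u', _, rfl⟩ := List.mem_map.mp hv
        exact u'.2
    · ext e
      induction e with
      | _ a b =>
      simp only [Set.mem_setOf_eq]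
      have hz := walk_edges_eq_zipWith w'
      rw [w'.support_eq_cons, List.tail_cons] at hz
      rw [← hz]
      constructor
      · intro he
        have hadj : H.Adj a b := Subgraph.mem_edgeSet.mp he
        have ha : a ∈ H.verts := H.edge_vert hadj
        have hb : b ∈ H.verts := H.edge_vert hadj.symm
        have hcoe : H.coe.Adj ⟨a, ha⟩ ⟨b, hb⟩ := by
          rw [Subgraph.coe_adj]; exact hadj
        have hmem : s((⟨a, ha⟩ : ↥H.verts), ⟨b, hb⟩) ∈ w.edges :=
          hedges _ hcoe
        rw [hw']; show s(a, b) ∈ (w.map H.hom).edges; rw [Walk.edges_map]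
        exact List.mem_map.mpr ⟨_, hmem, by simp [Sym2.map_pair_eq]⟩
      · intro he
        rw [hw'] at he; change s(a, b) ∈ (w.map H.hom).edges at he; rw [Walk.edges_map] at he
        obtain ⟨e', he', heq⟩ := List.mem_map.mp he
        rw [← heq]
        have hset : e' ∈ H.coe.edgeSet := w.edges_subset_edgeSet he'
        induction e' with
        | _ x y =>
        have hxy : H.Adj ↑x ↑y := (Subgraph.coe_adj H x y) ▸ ((SimpleGraph.mem_edgeSet H.coe).mp hset)
        rw [Sym2.map_pair_eq]
        exact Subgraph.mem_edgeSet.mpr hxy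
  choose f hfT hfv hfe using key
  have hinj : Function.Injective f := by
    intro H1 H2 hEq
    ext1
    refine SimpleGraph.Subgraph.ext ?_ ?_
    · rw [hfv H1, hfv H2, hEq]
    · ext a b
      rw [← SimpleGraph.Subgraph.mem_edgeSet, ← SimpleGraph.Subgraph.mem_edgeSet,
        hfe H1, hfe H2, hEq]
  have h1 : Nat.card {H : G.Subgraph // H.coe.IsTree ∧ H.verts.ncard = B} ≤ Nat.card {x // x ∈ T} := by
    refine Nat.card_le_card_of_injective (fun H => ⟨f H, hfT H⟩) ?_
    intro a b hab
    exact hinj (by simpa using congrArg Subtype.val hab)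
  refine h1.trans ?_
  rw [Nat.card_eq_fintype_card, Fintype.card_coe]
  calc T.card = ∑ r : V, (chainFinset G k r).card := by rw [hT, Finset.card_sigma]
    _ ≤ ∑ _r : V, D ^ k := Finset.sum_le_sum fun r _ => card_chainFinset_le hdeg k r
    _ = Fintype.card V * D ^ k := by rw [Finset.sum_const, smul_eq_mul, Finset.card_univ]
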